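/- Let K be a compact group with normalized Haar measure ν_K, and let (μ_n)_{n∈ℕ} be a sequence of Borel probability measures on K such that for every continuous f : K → ℝ and every x ∈ K, |∫ f(xy) dμ_n(y) − ∫ f(y) dμ_n(y)| → 0 as n → ∞. Then μ_n converges weakly to ν_K. -/

import Mathlib

open Filter Topology MeasureTheory

theorem stmt19 {K : Type*} [Group K] [TopologicalSpace K] [IsTopologicalGroup K]
    [CompactSpace K] [T2Space K] [MeasurableSpace K] [BorelSpace K]
    (ν : Measure K) [IsProbabilityMeasure ν]
    (hνleft : ∀ g : K, ν.map (fun x => g * x) = ν)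
    (hνright : ∀ g : K, ν.map (fun x => x * g) = ν)
    (μ : ℕ → Measure K) (hprob : ∀ n, IsProbabilityMeasure (μ n))
    (h : ∀ f : K → ℝ, Continuous f → ∀ x : K,
      Tendsto (fun n => ∫ y, f (x * y) ∂(μ n) - ∫ y, f y ∂(μ n)) atTop (𝓝 0)) :
    ∀ f : K → ℝ, Continuous f →
      Tendsto (fun n => ∫ y, f y ∂(μ n)) atTop (𝓝 (∫ y, f y ∂ν)) := by
  intro f hf
  obtain ⟨C, hC⟩ : ∃ C, ∀ x, ‖f x‖ ≤ C := by
    obtain ⟨C, hC⟩ := isCompact_univ.exists_bound_of_continuousOn hf.norm.continuousOn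
    exact ⟨C, fun x => (norm_norm (f x)) ▸ hC x (Set.mem_univ x)⟩
  set F : K → K → ℝ := fun x y => f (x * y) with hF
  have hFc : Continuous (Function.uncurry F) := hf.comp continuous_mul
  have hFcs : HasCompactSupport (Function.uncurry F) := HasCompactSupport.of_compactSpace _
  have hFsm : StronglyMeasurable (Function.uncurry F) := hFcs.stronglyMeasurable_of_prod hFc
  -- key: ∫ x, ∫ y, f (x*y) dμn dν = ∫ f dν
  have key : ∀ n, ∫ x, (∫ y, f (x * y) ∂(μ n)) ∂ν = ∫ y, f y ∂ν := by
    intro n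
    have := hprob n
    rw [show (fun x => ∫ y, f (x * y) ∂(μ n)) = fun x => ∫ y, F x y ∂(μ n) from rfl,
      integral_integral_swap_of_hasCompactSupport hFc hFcs]
    have h1 : ∀ y : K, ∫ x, f (x * y) ∂ν = ∫ z, f z ∂ν := by
      intro y
      conv_rhs => rw [← hνright y]
      rw [integral_map (by fun_prop) hf.aestronglyMeasurable]
    simp only [hF, h1]
    simp [measure_univ]
  set g : ℕ → K → ℝ := fun n x => ∫ y, f (x * y) ∂(μ n) - ∫ y, f y ∂(μ n) with hg
  have hintg : ∀ n, Integrable (fun x => ∫ y, f (x * y) ∂(μ n)) ν := by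
    intro n
    have := hprob n
    refine ⟨(hFsm.integral_prod_right' (ν := μ n)).aestronglyMeasurable, ?_⟩
    apply HasFiniteIntegral.of_bounded (C := C)
    refine Filter.Eventually.of_forall fun x => ?_
    calc ‖∫ y, f (x * y) ∂(μ n)‖ ≤ ∫ y, ‖f (x * y)‖ ∂(μ n) := norm_integral_le_integral_norm _
      _ ≤ ∫ _, C ∂(μ n) :=
          integral_mono_of_nonneg (Filter.Eventually.of_forall fun y => norm_nonneg _)
            (integrable_const C) (Filter.Eventually.of_forall fun y => hC _)
      _ = C := by simp [measure_univ]
  have hgmeas : ∀ n, AEStronglyMeasurable (g n) ν := fun n =>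
    ((hintg n).1.sub aestronglyMeasurable_const)
  have hbd : ∀ (m : Measure K) (_ : IsProbabilityMeasure m) (φ : K → ℝ),
      (∀ y, ‖φ y‖ ≤ C) → ‖∫ y, φ y ∂m‖ ≤ C := by
    intro m hm φ hφ
    calc ‖∫ y, φ y ∂m‖ ≤ ∫ y, ‖φ y‖ ∂m := norm_integral_le_integral_norm _
      _ ≤ ∫ _, C ∂m :=
          integral_mono_of_nonneg (Filter.Eventually.of_forall fun y => norm_nonneg _)
            (integrable_const C) (Filter.Eventually.of_forall fun y => hφ _)
      _ = C := by simp [measure_univ]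
  have hgbound : ∀ n, ∀ᵐ x ∂ν, ‖g n x‖ ≤ 2 * C := by
    intro n
    refine Filter.Eventually.of_forall fun x => ?_
    calc ‖g n x‖ ≤ ‖∫ y, f (x * y) ∂(μ n)‖ + ‖∫ y, f y ∂(μ n)‖ := norm_sub_le _ _
      _ ≤ C + C := add_le_add (hbd (μ n) (hprob n) _ fun y => hC _)
            (hbd (μ n) (hprob n) _ fun y => hC _)
      _ = 2 * C := by ring
  have hglim : ∀ᵐ x ∂ν, Tendsto (fun n => g n x) atTop (𝓝 0) :=
    Filter.Eventually.of_forall fun x => h f hf x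
  have hdct : Tendsto (fun n => ∫ x, g n x ∂ν) atTop (𝓝 (∫ _ : K, (0:ℝ) ∂ν)) :=
    tendsto_integral_of_dominated_convergence (fun _ => 2 * C) hgmeas
      (integrable_const _) hgbound hglim
  simp only [integral_zero] at hdct
  have heq : ∀ n, ∫ x, g n x ∂ν = ∫ y, f y ∂ν - ∫ y, f y ∂(μ n) := by
    intro n
    rw [hg]
    rw [integral_sub (hintg n) (integrable_const _), key n, integral_const]
    simp [measure_univ]
  have hfin : Tendsto (fun n => ∫ y, f y ∂ν - (∫ y, f y ∂ν - ∫ y, f y ∂(μ n))) atTop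
      (𝓝 (∫ y, f y ∂ν - 0)) := by
    apply Tendsto.const_sub
    simpa only [heq] using hdct
  simpa using hfin
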